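/- Let n, m ∈ ℕ with m ∣ n and m ≥ 2, and let R ⊆ ZMod n satisfy 0 ∉ R and R = −R. Then the set T = {t ∈ ZMod (n/m) : there exists S ⊆ ZMod n such that for all a, b ∈ ZMod n, a − b ∈ R ↔ Θ_{n,m,t}(a) − Θ_{n,m,t}(b) ∈ S} is an additive subgroup of ZMod (n/m) (it contains 0 and is closed under addition and negation); consequently the set of images {Θ_{n,m,t}(C_n(R)) : t ∈ T} forms an abelian group under the composition induced by t ↦ t + t' taken modulo n/m. -/

import Mathlib

/-- The transformation Θ_{n,m,t} : ZMod n → ZMod n, sending x to x + j·t·m where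
j is the remainder of the canonical representative of x modulo m. -/
def theta (n m t : ℕ) (x : ZMod n) : ZMod n :=
  x + (((x.val % m) * t * m : ℕ) : ZMod n)



section pos
variable {n m : ℕ}

lemma val_add_nat (hn : 0 < n) (hmn : m ∣ n) (x : ZMod n) (c : ℕ) :
    (x + (c : ZMod n)).val % m = (x.val + c) % m := by
  haveI : NeZero n := ⟨hn.ne'⟩
  rw [ZMod.val_add, ZMod.val_natCast, Nat.mod_mod_of_dvd _ hmn, Nat.add_mod,
    Nat.mod_mod_of_dvd _ hmn, ← Nat.add_mod]

lemma sub_natCast (hn : 0 < n) (x : ZMod n) (c : ℕ) :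
    x - (c : ZMod n) = x + ((c * (n - 1) : ℕ) : ZMod n) := by
  have h1 : ((n : ℕ) : ZMod n) = 0 := ZMod.natCast_self n
  push_cast [Nat.cast_sub (by omega : 1 ≤ n)]
  rw [h1]
  ring

lemma val_mod_add (hn : 0 < n) (hmn : m ∣ n) (x : ZMod n) (c : ℕ) (hc : m ∣ c) :
    (x + (c : ZMod n)).val % m = x.val % m := by
  obtain ⟨q, rfl⟩ := hc
  rw [val_add_nat hn hmn, Nat.add_mod, Nat.mul_mod_right, Nat.add_zero]
  exact Nat.mod_mod_of_dvd _ dvd_rfl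

lemma val_mod_sub (hn : 0 < n) (hmn : m ∣ n) (x : ZMod n) (c : ℕ) (hc : m ∣ c) :
    (x - (c : ZMod n)).val % m = x.val % m := by
  rw [sub_natCast hn, val_mod_add hn hmn _ _ (hc.mul_right _)]

end pos

section pos2
variable {n m : ℕ}

lemma theta_val_mod (hn : 0 < n) (hmn : m ∣ n) (k : ℕ) (x : ZMod n) :
    (theta n m k x).val % m = x.val % m :=
  val_mod_add hn hmn x _ ⟨(x.val % m) * k, by ring⟩

lemma theta_diff (hn : 0 < n) (hmn : m ∣ n) (hm : 2 ≤ m) (k : ℕ) (a b : ZMod n) :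
    theta n m k a - theta n m k b = theta n m k (a - b) ∨
    (theta n m k a - theta n m k b = theta n m k (a - b) - ((k*m*m : ℕ) : ZMod n) ∧
      (a - b).val % m ≠ 0) := by
  haveI : NeZero n := ⟨hn.ne'⟩
  set d := a - b with hd
  have hab : a = b + d := by rw [hd]; ring
  have hja : a.val % m = (b.val % m + d.val % m) % m := by
    rw [hab, ZMod.val_add, Nat.mod_mod_of_dvd _ hmn, Nat.add_mod]
  have hjbm : b.val % m < m := Nat.mod_lt _ (by omega)
  have hjdm : d.val % m < m := Nat.mod_lt _ (by omega)
  rcases Nat.lt_or_ge (b.val % m + d.val % m) m with hlt | hge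
  · left
    rw [Nat.mod_eq_of_lt hlt] at hja
    show a + ((a.val % m * k * m : ℕ) : ZMod n) - (b + _) = d + _
    rw [hja]
    push_cast
    ring
  · right
    have hja2 : a.val % m + m = b.val % m + d.val % m := by
      have h2 : (b.val % m + d.val % m) % m = b.val % m + d.val % m - m := by
        rw [Nat.mod_eq_sub_mod hge, Nat.mod_eq_of_lt (by omega)]
      omega
    constructor
    · show a + ((a.val % m * k * m : ℕ) : ZMod n) - (b + _) = d + _ - _
      have hc : ((a.val % m * k * m + m * k * m : ℕ) : ZMod n)
          = ((b.val % m * k * m + d.val % m * k * m : ℕ) : ZMod n) := by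
        congr 1
        have h3 : ∀ p q : ℕ, (p + q) * k * m = p * k * m + q * k * m := fun p q => by ring
        rw [← h3, ← h3, hja2]
      push_cast at hc ⊢
      linear_combination hc
    · omega
end pos2

section char
variable {n m : ℕ}

lemma char_pos (hn : 0 < n) (hmn : m ∣ n) (hm : 2 ≤ m) (R : Set (ZMod n)) (k : ℕ) :
    (∃ S : Set (ZMod n), ∀ a b : ZMod n,
        a - b ∈ R ↔ theta n m k a - theta n m k b ∈ S) ↔
    (∀ x : ZMod n, x.val % m ≠ 0 → (x ∈ R ↔ x - ((k*m*m : ℕ) : ZMod n) ∈ R)) := by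
  haveI : NeZero n := ⟨hn.ne'⟩
  have hmn' : m ≤ n := Nat.le_of_dvd hn hmn
  have hdvd : m ∣ k * m * m := ⟨k * m, by ring⟩
  constructor
  · rintro ⟨S, hS⟩ x hx
    set j := x.val % m with hj
    have hj0 : 0 < j := Nat.pos_of_ne_zero hx
    have hjm : j < m := Nat.mod_lt _ (by omega)
    have hjx : j ≤ x.val := Nat.mod_le _ _
    have hxn : x.val < n := ZMod.val_lt x
    -- pair 1 : (x - j, -j)
    have ha1 : (x - ((j : ℕ) : ZMod n)) = (((x.val - j : ℕ)) : ZMod n) := by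
      conv_lhs => rw [← ZMod.natCast_rightInverse x]
      rw [Nat.cast_sub hjx]
    have ha1v : (x - ((j : ℕ) : ZMod n)).val = x.val - j := by
      rw [ha1, ZMod.val_natCast, Nat.mod_eq_of_lt (by omega)]
    have hq := Nat.mod_add_div x.val m
    have ha1vm : (x - ((j : ℕ) : ZMod n)).val % m = 0 := by
      rw [ha1v]
      have h2 : x.val - j = m * (x.val / m) := by
        conv_lhs => rw [← hq]
        rw [← hj, Nat.add_sub_cancel_left]
      rw [h2, Nat.mul_mod_right]
    have hθa1 : theta n m k (x - ((j : ℕ) : ZMod n)) = x - ((j : ℕ) : ZMod n) := by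
      show _ + _ = _
      rw [ha1vm]
      simp
    have hjcast : ((j : ℕ) : ZMod n) ≠ 0 := by
      intro h
      have h6 := congrArg ZMod.val h
      rw [ZMod.val_natCast_of_lt (by omega), ZMod.val_zero] at h6
      omega
    have hb1v : ((-(j : ℕ) : ZMod n)).val = n - j := by
      rw [ZMod.neg_val, if_neg hjcast, ZMod.val_natCast_of_lt (by omega)]
    obtain ⟨Q, hQn⟩ := hmn
    have hQ1 : 1 ≤ Q := by
      rcases Nat.eq_zero_or_pos Q with h | h
      · subst h; rw [Nat.mul_zero] at hQn; omega
      · exact h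
    have hb1vm : ((-(j : ℕ) : ZMod n)).val % m = m - j := by
      rw [hb1v]
      obtain ⟨Q', rfl⟩ : ∃ Q', Q = Q' + 1 := ⟨Q - 1, by omega⟩
      have h4 : n - j = m * Q' + (m - j) := by
        have h5 : n = m * Q' + m := by rw [hQn, Nat.mul_add, Nat.mul_one]
        rw [h5, Nat.add_sub_assoc (le_of_lt hjm)]
      rw [h4, Nat.mul_add_mod, Nat.mod_eq_of_lt (by omega)]
    have hθb1 : theta n m k (-(j : ℕ) : ZMod n)
        = -(j : ℕ) + (((m - j) * k * m : ℕ) : ZMod n) := by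
      show _ + _ = _
      rw [hb1vm]
    -- pair 2 : (x - kmm, 0)
    have ha2vm : (x - ((k*m*m : ℕ) : ZMod n)).val % m = j := by
      rw [val_mod_sub hn ⟨Q, hQn⟩ _ _ hdvd]
    have hθa2 : theta n m k (x - ((k*m*m : ℕ) : ZMod n))
        = x - ((k*m*m : ℕ) : ZMod n) + ((j * k * m : ℕ) : ZMod n) := by
      show _ + _ = _
      rw [ha2vm]
    have hθb2 : theta n m k (0 : ZMod n) = 0 := by
      show _ + _ = _
      rw [ZMod.val_zero]
      simp
    have h1 := hS (x - ((j : ℕ) : ZMod n)) (-(j : ℕ) : ZMod n)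
    have h2 := hS (x - ((k*m*m : ℕ) : ZMod n)) (0 : ZMod n)
    rw [hθa1, hθb1] at h1
    rw [hθa2, hθb2] at h2
    have e1 : (x - ((j : ℕ) : ZMod n)) - (-(j : ℕ) : ZMod n) = x := by ring
    rw [e1] at h1
    simp only [sub_zero] at h2
    have hVnat : ((m - j) * k * m + j * k * m : ℕ) = k * m * m := by
      have h3 : ∀ p q : ℕ, (p + q) * k * m = p * k * m + q * k * m := fun p q => by ring
      rw [← h3, Nat.sub_add_cancel (le_of_lt hjm)]
      ring
    have hV : (x - ((j : ℕ) : ZMod n)) - (-(j : ℕ) + (((m - j) * k * m : ℕ) : ZMod n))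
        = x - ((k*m*m : ℕ) : ZMod n) + ((j * k * m : ℕ) : ZMod n) := by
      have hc := congrArg (Nat.cast : ℕ → ZMod n) hVnat
      push_cast at hc ⊢
      linear_combination -hc
    rw [hV] at h1
    exact h1.trans h2.symm
  · intro hQ
    refine ⟨{v | ∃ a b : ZMod n, a - b ∈ R ∧ theta n m k a - theta n m k b = v}, ?_⟩
    intro a b
    constructor
    · intro h
      exact ⟨a, b, h, rfl⟩
    · rintro ⟨a', b', h', heq⟩
      have hab := theta_diff hn hmn hm k a b
      have hab' := theta_diff hn hmn hm k a' b'
      set d := a - b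
      set d' := a' - b'
      have hjveq : ∀ u v : ZMod n, theta n m k u = theta n m k v → u.val % m = v.val % m := by
        intro u v h
        have := congrArg (fun z : ZMod n => z.val % m) h
        simpa [theta_val_mod hn hmn] using this
      rcases hab with h1 | ⟨h1, hd1⟩ <;> rcases hab' with h2 | ⟨h2, hd2⟩
      · -- both plain : theta d = theta d'
        have he : theta n m k d = theta n m k d' := by rw [← h1, ← h2, heq]
        have hjj := hjveq _ _ he
        have : d = d' := by
          have he2 : d + ((d.val % m * k * m : ℕ) : ZMod n)
              = d' + ((d'.val % m * k * m : ℕ) : ZMod n) := he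
          rw [hjj] at he2
          linear_combination he2
        rwa [this]
      · -- theta d = theta d' - c
        have he : theta n m k d = theta n m k d' - ((k*m*m : ℕ) : ZMod n) := by
          rw [← h1, ← h2, heq]
        have hjj : d.val % m = d'.val % m := by
          have h5 : (theta n m k d).val % m
              = (theta n m k d' - ((k*m*m : ℕ) : ZMod n)).val % m := congrArg (fun z : ZMod n => z.val % m) he
          rwa [val_mod_sub hn hmn _ _ hdvd, theta_val_mod hn hmn, theta_val_mod hn hmn] at h5
        have hdd : d = d' - ((k*m*m : ℕ) : ZMod n) := by
          have he2 : d + ((d.val % m * k * m : ℕ) : ZMod n)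
              = d' + ((d'.val % m * k * m : ℕ) : ZMod n) - ((k*m*m : ℕ) : ZMod n) := he
          rw [hjj] at he2
          linear_combination he2
        rw [hdd]
        exact (hQ d' hd2).mp h'
      · -- theta d - c = theta d'
        have he : theta n m k d - ((k*m*m : ℕ) : ZMod n) = theta n m k d' := by
          rw [← h1, ← h2, heq]
        have hjj : d.val % m = d'.val % m := by
          have h5 : (theta n m k d - ((k*m*m : ℕ) : ZMod n)).val % m
              = (theta n m k d').val % m := congrArg (fun z : ZMod n => z.val % m) he
          rwa [val_mod_sub hn hmn _ _ hdvd, theta_val_mod hn hmn, theta_val_mod hn hmn] at h5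
        have hdd : d - ((k*m*m : ℕ) : ZMod n) = d' := by
          have he2 : d + ((d.val % m * k * m : ℕ) : ZMod n) - ((k*m*m : ℕ) : ZMod n)
              = d' + ((d'.val % m * k * m : ℕ) : ZMod n) := he
          rw [hjj] at he2
          linear_combination he2
        have := (hQ d hd1).mpr (by rw [hdd]; exact h')
        exact this
      · -- both shifted
        have he : theta n m k d = theta n m k d' := by
          have : theta n m k d - ((k*m*m : ℕ) : ZMod n)
              = theta n m k d' - ((k*m*m : ℕ) : ZMod n) := by rw [← h1, ← h2, heq]
          linear_combination this
        have hjj := hjveq _ _ he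
        have : d = d' := by
          have he2 : d + ((d.val % m * k * m : ℕ) : ZMod n)
              = d' + ((d'.val % m * k * m : ℕ) : ZMod n) := he
          rw [hjj] at he2
          linear_combination he2
        rwa [this]
end char

section possub
variable {n m : ℕ}

def Qp (n m : ℕ) (R : Set (ZMod n)) (k : ℕ) : Prop :=
  ∀ x : ZMod n, x.val % m ≠ 0 → (x ∈ R ↔ x - ((k*m*m : ℕ) : ZMod n) ∈ R)

lemma cast_mm_mod (hmn : m ∣ n) (k : ℕ) :
    ((k*m*m : ℕ) : ZMod n) = ((k % (n/m) * m * m : ℕ) : ZMod n) := by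
  have hw : n / m * m = n := Nat.div_mul_cancel hmn
  conv_lhs => rw [← Nat.mod_add_div k (n/m)]
  have h : (k % (n/m) + n/m * (k / (n/m))) * m * m
      = k % (n/m) * m * m + (n/m*m) * ((k/(n/m)) * m) := by ring
  rw [h, hw, Nat.cast_add]
  simp

lemma Qp_add (hn : 0 < n) (hmn : m ∣ n) (R : Set (ZMod n)) {u v : ℕ}
    (hu : Qp n m R u) (hv : Qp n m R v) : Qp n m R (u + v) := by
  intro x hx
  have h1 := hu x hx
  have hx2 : (x - ((u*m*m : ℕ) : ZMod n)).val % m ≠ 0 := by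
    rw [val_mod_sub hn hmn _ _ ⟨u*m, by ring⟩]; exact hx
  have h2 := hv _ hx2
  have e : x - ((u*m*m : ℕ) : ZMod n) - ((v*m*m : ℕ) : ZMod n)
      = x - (((u+v)*m*m : ℕ) : ZMod n) := by push_cast; ring
  rw [e] at h2
  exact h1.trans h2

lemma Qp_add_right (hn : 0 < n) (hmn : m ∣ n) (R : Set (ZMod n)) {u : ℕ}
    (hu : Qp n m R u) : ∀ x : ZMod n, x.val % m ≠ 0 →
      (x ∈ R ↔ x + ((u*m*m : ℕ) : ZMod n) ∈ R) := by
  intro x hx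
  have hx2 : (x + ((u*m*m : ℕ) : ZMod n)).val % m ≠ 0 := by
    rw [val_mod_add hn hmn _ _ ⟨u*m, by ring⟩]; exact hx
  have h2 := hu _ hx2
  have e : x + ((u*m*m : ℕ) : ZMod n) - ((u*m*m : ℕ) : ZMod n) = x := by ring
  rw [e] at h2
  exact h2.symm

end possub

def thz (m k : ℕ) (x : ℤ) : ℤ := x + ((x.natAbs % m * k * m : ℕ) : ℤ)

lemma thz_diff (m k : ℕ) (a b : ℤ) :
    thz m k a - thz m k b
      = (a - b) + (((a.natAbs % m : ℕ) : ℤ) - ((b.natAbs % m : ℕ) : ℤ)) * (k * m) := by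
  unfold thz
  push_cast
  ring

lemma jz_of_nonneg {m : ℕ} (x : ℤ) (hx : 0 ≤ x) :
    ((x.natAbs % m : ℕ) : ℤ) = x % (m : ℤ) := by
  conv_rhs => rw [← Int.natAbs_of_nonneg hx]
  push_cast
  rfl

lemma conA {m : ℕ} (hm : 2 ≤ m) (k u : ℕ) (hu : u < m) (d : ℤ) :
    ∃ a b : ℤ, a - b = d ∧
      thz m k a - thz m k b = d + (((d + u) % (m : ℤ)) - u) * (k * m) := by
  set b : ℤ := (m : ℤ) * ((d.natAbs : ℤ) + 1) + u with hb
  have hb0 : 0 ≤ b := by positivity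
  have hmul : (1 : ℤ) * ((d.natAbs : ℤ) + 1) ≤ (m : ℤ) * ((d.natAbs : ℤ) + 1) := by
    apply mul_le_mul_of_nonneg_right
    · exact_mod_cast Nat.one_le_of_lt hm
    · positivity
  have ha0 : 0 ≤ d + b := by omega
  refine ⟨d + b, b, by ring, ?_⟩
  rw [thz_diff]
  have e1 : ((d + b) - b) = d := by ring
  rw [e1]
  have hjb : ((b.natAbs % m : ℕ) : ℤ) = (u : ℤ) := by
    rw [jz_of_nonneg b hb0]
    have e2 : b = (u : ℤ) + ((d.natAbs : ℤ) + 1) * m := by rw [hb]; ring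
    rw [e2, Int.add_mul_emod_self_right]
    exact Int.emod_eq_of_lt (by positivity) (by exact_mod_cast hu)
  have hja : (((d + b).natAbs % m : ℕ) : ℤ) = (d + u) % m := by
    rw [jz_of_nonneg _ ha0]
    have e3 : d + b = (d + (u : ℤ)) + ((d.natAbs : ℤ) + 1) * m := by rw [hb]; ring
    rw [e3, Int.add_mul_emod_self_right]
  rw [hja, hjb]

lemma conB {m : ℕ} (hm : 2 ≤ m) (k u : ℕ) (hu0 : 0 < u) (hu : u < m) (d : ℤ)
    (hd : (u : ℤ) < d) :
    ∃ a b : ℤ, a - b = d ∧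
      thz m k a - thz m k b = d + (((d - u) % (m : ℤ)) - u) * (k * m) := by
  refine ⟨d - u, -(u : ℤ), by ring, ?_⟩
  rw [thz_diff]
  have e1 : (d - (u:ℤ)) - (-(u:ℤ)) = d := by ring
  rw [e1]
  have hjb : (((-(u:ℤ)).natAbs % m : ℕ) : ℤ) = (u : ℤ) := by
    rw [Int.natAbs_neg, Int.natAbs_natCast]
    exact_mod_cast congrArg (Nat.cast : ℕ → ℤ) (Nat.mod_eq_of_lt hu)
  have hja : (((d - (u:ℤ)).natAbs % m : ℕ) : ℤ) = (d - u) % m :=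
    jz_of_nonneg _ (by omega)
  rw [hja, hjb]

lemma chainP (c : ℤ) (P : ℤ → Prop)
    (hP : ∀ x : ℤ, P x → P (x + c)) (hP' : ∀ x : ℤ, P (x + c) → P x) :
    ∀ (N : ℤ) (x : ℤ), P x → P (x + N * c) := by
  intro N
  induction N using Int.induction_on with
  | zero => intro x hx; simpa using hx
  | succ i ih =>
      intro x hx
      have h2 := hP _ (ih x hx)
      have e : x + (↑i + 1) * c = x + ↑i * c + c := by ring
      rwa [e]
  | pred i ih =>
      intro x hx
      have h2 := ih x hx
      have e : x + (-↑i - 1) * c + c = x + -↑i * c := by ring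
      exact hP' _ (by rwa [e])

lemma chainZ (R : Set ℤ) (c : ℤ) (P : ℤ → Prop)
    (hP : ∀ x : ℤ, P x → P (x + c)) (hP' : ∀ x : ℤ, P (x + c) → P x)
    (h : ∀ x : ℤ, P x → (x ∈ R ↔ x + c ∈ R)) :
    ∀ (N : ℤ) (x : ℤ), P x → (x ∈ R ↔ x + N * c ∈ R) := by
  intro N
  induction N using Int.induction_on with
  | zero => intro x hx; simp
  | succ i ih =>
      intro x hx
      have h3 := h _ (chainP c P hP hP' i x hx)
      have e : x + ↑i * c + c = x + (↑i + 1) * c := by ring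
      rw [e] at h3
      exact (ih x hx).trans h3
  | pred i ih =>
      intro x hx
      have h3 := h _ (chainP c P hP hP' (-↑i - 1) x hx)
      have e : x + (-↑i - 1) * c + c = x + -↑i * c := by ring
      rw [e] at h3
      exact (ih x hx).trans h3.symm

lemma gcd_two_cases (m : ℕ) : (2 ∣ m ∧ Nat.gcd 2 m = 2) ∨ (¬ 2 ∣ m ∧ Nat.gcd 2 m = 1) := by
  by_cases h : 2 ∣ m
  · exact Or.inl ⟨h, Nat.gcd_eq_left h⟩
  · refine Or.inr ⟨h, ?_⟩
    rcases (Nat.dvd_prime Nat.prime_two).mp (Nat.gcd_dvd_left 2 m) with h1 | h1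
    · exact h1
    · exact absurd (h1 ▸ Nat.gcd_dvd_right 2 m) h

lemma memneg {R : Set ℤ} (hsym : -R = R) : ∀ y : ℤ, -y ∈ R ↔ y ∈ R := by
  intro y
  conv_lhs => rw [← hsym]
  rw [Set.mem_neg, neg_neg]

lemma ndvd_iff {m : ℕ} (hm : 2 ≤ m) (x : ℤ) : x.natAbs % m ≠ 0 ↔ ¬ ((m : ℤ) ∣ x) := by
  rw [Ne, ← Nat.dvd_iff_mod_eq_zero]
  constructor
  · intro h1 h2
    exact h1 (Int.natCast_dvd_natCast.mp (Int.dvd_natAbs.mpr h2))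
  · intro h1 h2
    exact h1 (Int.dvd_natAbs.mp (Int.natCast_dvd_natCast.mpr h2))

lemma char_zero {m : ℕ} (hm : 2 ≤ m) (R : Set ℤ) (hsym : -R = R) (k : ℕ) :
    (∃ S : Set ℤ, ∀ a b : ℤ, a - b ∈ R ↔ thz m k a - thz m k b ∈ S) ↔
    (∀ x : ℤ, (x.natAbs % m ≠ 0 ∨ 3 ≤ m) →
      (x ∈ R ↔ x + ((Nat.gcd 2 m * m * k : ℕ) : ℤ) ∈ R)) := by
  have hm0 : (0:ℤ) < (m:ℤ) := by exact_mod_cast (by omega : 0 < m)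
  have hgcase := gcd_two_cases m
  set g : ℕ := Nat.gcd 2 m with hgdef
  have hg1 : 1 ≤ g := by rcases hgcase with ⟨_, h⟩ | ⟨_, h⟩ <;> omega
  have hg2 : g ≤ 2 := by rcases hgcase with ⟨_, h⟩ | ⟨_, h⟩ <;> omega
  have hcast : ((g * m * k : ℕ) : ℤ) = (g:ℤ) * ((k:ℤ) * (m:ℤ)) := by push_cast; ring
  constructor
  · rintro ⟨S, hS⟩
    rcases Nat.eq_zero_or_pos k with rfl | hk
    · intro x _
      simp
    intro x hx
    have hREL : ∀ a b a' b' : ℤ, thz m k a - thz m k b = thz m k a' - thz m k b' →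
        ((a - b) ∈ R ↔ (a' - b') ∈ R) := fun a b a' b' hh =>
      (hS a b).trans (by rw [hh]; exact (hS a' b').symm)
    have hneg := memneg hsym
    have hkm2 : (2:ℤ) ≤ (k:ℤ) * (m:ℤ) := by
      have h1 : (1:ℤ) ≤ (k:ℤ) := by exact_mod_cast hk
      nlinarith
    -- step of 2km for x not divisible by m
    have z1' : ∀ y : ℤ, ¬ ((m:ℤ) ∣ y) → (2:ℤ) ≤ y + 2*((k:ℤ)*(m:ℤ)) →
        (y ∈ R ↔ y + 2*((k:ℤ)*(m:ℤ)) ∈ R) := by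
      intro y hy hbound
      have hr0 : y % (m:ℤ) ≠ 0 := fun h => hy (Int.dvd_of_emod_eq_zero h)
      have hrpos : 0 < y % (m:ℤ) :=
        lt_of_le_of_ne (Int.emod_nonneg y (by omega)) (Ne.symm hr0)
      have hrlt : y % (m:ℤ) < (m:ℤ) := Int.emod_lt_of_pos y hm0
      obtain ⟨a, b, hab, hv⟩ := conA hm k 0 (by omega) y
      obtain ⟨a', b', hab', hv'⟩ := conB hm k 1 one_pos (by omega)
        (y + 2*((k:ℤ)*(m:ℤ))) (by omega)
      have hq := Int.emod_add_mul_ediv y (m:ℤ)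
      have e1 : (y + 2*((k:ℤ)*(m:ℤ)) - ((1:ℕ):ℤ)) % (m:ℤ) = y % (m:ℤ) - 1 := by
        have e2 : y + 2*((k:ℤ)*(m:ℤ)) - ((1:ℕ):ℤ)
            = (y % (m:ℤ) - 1) + ((y / (m:ℤ)) + 2*(k:ℤ)) * (m:ℤ) := by
          push_cast
          linear_combination -hq
        rw [e2, Int.add_mul_emod_self_right]
        exact Int.emod_eq_of_lt (by omega) (by omega)
      have hveq : thz m k a - thz m k b = thz m k a' - thz m k b' := by
        rw [hv, hv', e1]
        push_cast
        ring
      have h5 := hREL a b a' b' hveq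
      rwa [hab, hab'] at h5
    have hdvd2km : (m:ℤ) ∣ 2*((k:ℤ)*(m:ℤ)) := ⟨2*(k:ℤ), by ring⟩
    have z1 : ∀ y : ℤ, ¬ ((m:ℤ) ∣ y) → (y ∈ R ↔ y + 2*((k:ℤ)*(m:ℤ)) ∈ R) := by
      intro y hy
      by_cases hc : (2:ℤ) ≤ y + 2*((k:ℤ)*(m:ℤ))
      · exact z1' y hy hc
      · have hy2 : ¬ ((m:ℤ) ∣ (-y - 2*((k:ℤ)*(m:ℤ)))) := by
          intro hdd
          apply hy
          have h4 := dvd_add hdd hdvd2km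
          have h5 : (m:ℤ) ∣ -y := by
            have e : -y - 2*((k:ℤ)*(m:ℤ)) + 2*((k:ℤ)*(m:ℤ)) = -y := by ring
            rwa [e] at h4
          exact (dvd_neg.mp h5)
        have h2 := z1' (-y - 2*((k:ℤ)*(m:ℤ))) hy2 (by omega)
        have e1 : -y - 2*((k:ℤ)*(m:ℤ)) = -(y + 2*((k:ℤ)*(m:ℤ))) := by ring
        have e2 : -y - 2*((k:ℤ)*(m:ℤ)) + 2*((k:ℤ)*(m:ℤ)) = -y := by ring
        rw [e2, e1, hneg, hneg] at h2
        exact h2.symm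
    -- step of k*m*m for x not divisible by m
    have z2 : ∀ y : ℤ, ¬ ((m:ℤ) ∣ y) → (y ∈ R ↔ y + ((k:ℤ)*(m:ℤ))*(m:ℤ) ∈ R) := by
      intro y hy
      have hr0 : y % (m:ℤ) ≠ 0 := fun h => hy (Int.dvd_of_emod_eq_zero h)
      have hrpos : 0 < y % (m:ℤ) :=
        lt_of_le_of_ne (Int.emod_nonneg y (by omega)) (Ne.symm hr0)
      have hrlt : y % (m:ℤ) < (m:ℤ) := Int.emod_lt_of_pos y hm0
      obtain ⟨a, b, hab, hv⟩ := conA hm k 0 (by omega) y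
      obtain ⟨a', b', hab', hv'⟩ := conA hm k (m-1) (by omega)
        (y + ((k:ℤ)*(m:ℤ))*(m:ℤ))
      have hq := Int.emod_add_mul_ediv y (m:ℤ)
      have e1 : (y + ((k:ℤ)*(m:ℤ))*(m:ℤ) + ((m-1 : ℕ):ℤ)) % (m:ℤ) = y % (m:ℤ) - 1 := by
        have e2 : y + ((k:ℤ)*(m:ℤ))*(m:ℤ) + ((m-1 : ℕ):ℤ)
            = (y % (m:ℤ) - 1) + ((y / (m:ℤ)) + (k:ℤ)*(m:ℤ) + 1) * (m:ℤ) := by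
          push_cast [Nat.cast_sub (by omega : 1 ≤ m)]
          linear_combination -hq
        rw [e2, Int.add_mul_emod_self_right]
        exact Int.emod_eq_of_lt (by omega) (by omega)
      have hveq : thz m k a - thz m k b = thz m k a' - thz m k b' := by
        rw [hv, hv', e1]
        push_cast [Nat.cast_sub (by omega : 1 ≤ m)]
        ring
      have h5 := hREL a b a' b' hveq
      rwa [hab, hab'] at h5
    -- step of g*km for multiples of m when m ≥ 3
    have z3 : 3 ≤ m → ∀ y : ℤ, ((m:ℤ) ∣ y) →
        (y ∈ R ↔ y + (g:ℤ)*((k:ℤ)*(m:ℤ)) ∈ R) := by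
      intro hm3
      have hu2 : 2 * ((m+g)/2) = m + g := by
        rcases hgcase with ⟨h2, hgg⟩ | ⟨h2, hgg⟩ <;> omega
      set u : ℕ := (m+g)/2 with hu
      have hu0 : 0 < u := by omega
      have hum : u < m := by omega
      have hdvdgkm : (m:ℤ) ∣ (g:ℤ)*((k:ℤ)*(m:ℤ)) := ⟨(g:ℤ)*(k:ℤ), by ring⟩
      have hmgkm : (m:ℤ) ≤ (g:ℤ)*((k:ℤ)*(m:ℤ)) := by
        have h1 : (1:ℤ) ≤ (k:ℤ) := by exact_mod_cast hk
        have h9 : (1:ℤ) ≤ (g:ℤ) := by exact_mod_cast hg1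
        nlinarith
      have z3' : ∀ y : ℤ, ((m:ℤ) ∣ y) → ((u:ℤ) < y + (g:ℤ)*((k:ℤ)*(m:ℤ))) →
          (y ∈ R ↔ y + (g:ℤ)*((k:ℤ)*(m:ℤ)) ∈ R) := by
        intro y hy hbb
        obtain ⟨a, b, hab, hv⟩ := conA hm k 0 (by omega) y
        obtain ⟨a', b', hab', hv'⟩ := conB hm k u hu0 hum
          (y + (g:ℤ)*((k:ℤ)*(m:ℤ))) hbb
        have hy0 : y % (m:ℤ) = 0 := Int.emod_eq_zero_of_dvd hy
        have hyq : (m:ℤ) * (y / (m:ℤ)) = y := Int.mul_ediv_cancel' hy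
        have e1 : (y + (g:ℤ)*((k:ℤ)*(m:ℤ)) - (u:ℤ)) % (m:ℤ) = (m:ℤ) - (u:ℤ) := by
          have e2 : y + (g:ℤ)*((k:ℤ)*(m:ℤ)) - (u:ℤ)
              = ((m:ℤ) - (u:ℤ)) + ((y / (m:ℤ)) + (g:ℤ)*(k:ℤ) - 1) * (m:ℤ) := by
            linear_combination -hyq
          rw [e2, Int.add_mul_emod_self_right]
          refine Int.emod_eq_of_lt (by omega) (by exact_mod_cast (by omega : (m:ℤ) - (u:ℤ) < (m:ℤ)))
        have hg2u : ((m:ℤ) - 2*(u:ℤ)) = -(g:ℤ) := by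
          have h6 := congrArg (Nat.cast : ℕ → ℤ) hu2
          push_cast at h6
          linarith
        have hveq : thz m k a - thz m k b = thz m k a' - thz m k b' := by
          rw [hv, hv', e1]
          simp only [Nat.cast_zero, add_zero, sub_zero]
          rw [hy0]
          linear_combination -((k:ℤ)*(m:ℤ)) * hg2u
        have h5 := hREL a b a' b' hveq
        rwa [hab, hab'] at h5
      intro y hy
      by_cases hc : (u:ℤ) < y + (g:ℤ)*((k:ℤ)*(m:ℤ))
      · exact z3' y hy hc
      · have hy2 : (m:ℤ) ∣ (-y - (g:ℤ)*((k:ℤ)*(m:ℤ))) := by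
          exact dvd_sub (dvd_neg.mpr hy) hdvdgkm
        have hyneg : y < 0 := by omega
        have hmy : (m:ℤ) ≤ -y := Int.le_of_dvd (by omega) (dvd_neg.mpr hy)
        have h2 := z3' (-y - (g:ℤ)*((k:ℤ)*(m:ℤ))) hy2 (by omega)
        have e1 : -y - (g:ℤ)*((k:ℤ)*(m:ℤ)) = -(y + (g:ℤ)*((k:ℤ)*(m:ℤ))) := by ring
        have e2 : -y - (g:ℤ)*((k:ℤ)*(m:ℤ)) + (g:ℤ)*((k:ℤ)*(m:ℤ)) = -y := by ring
        rw [e2, e1, hneg, hneg] at h2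
        exact h2.symm
    -- assemble
    rw [hcast]
    by_cases hdv : (m:ℤ) ∣ x
    · have h3 : 3 ≤ m := by
        rcases hx with h | h
        · exact absurd hdv (((ndvd_iff hm x).mp h))
        · exact h
      exact z3 h3 x hdv
    · rcases hgcase with ⟨h2m, hgg⟩ | ⟨h2m, hgg⟩
      · rw [hgg]
        have h8 := z1 x hdv
        have e : ((2:ℕ):ℤ) = (2:ℤ) := by norm_num
        rw [e]
        exact h8
      · rw [hgg]
        have hm3 : 3 ≤ m := by
          rcases Nat.even_or_odd m with he | ho
          · exact absurd he.two_dvd h2m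
          · omega
        have hchain := chainZ R (2*((k:ℤ)*(m:ℤ))) (fun y => ¬ ((m:ℤ) ∣ y))
          (fun y hy hdd => hy (by
            have h4 := dvd_sub hdd hdvd2km
            have e : y + 2*((k:ℤ)*(m:ℤ)) - 2*((k:ℤ)*(m:ℤ)) = y := by ring
            rwa [e] at h4))
          (fun y hy hdd => hy (dvd_add hdd hdvd2km)) z1
        have h4 := z2 x hdv
        have hx2 : ¬ ((m:ℤ) ∣ (x + (k:ℤ)*(m:ℤ))) := by
          intro hdd
          apply hdv
          have hkmdvd : (m:ℤ) ∣ (k:ℤ)*(m:ℤ) := ⟨(k:ℤ), by ring⟩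
          have h5 := dvd_sub hdd hkmdvd
          have e : x + (k:ℤ)*(m:ℤ) - (k:ℤ)*(m:ℤ) = x := by ring
          rwa [e] at h5
        have h5 := hchain (((m-1)/2 : ℕ) : ℤ) (x + (k:ℤ)*(m:ℤ)) hx2
        have hodd : ((m-1)/2) * 2 = m - 1 := by
          rcases Nat.even_or_odd m with he | ho
          · exact absurd he.two_dvd h2m
          · obtain ⟨w, hw⟩ := ho
            omega
        have e3 : x + (k:ℤ)*(m:ℤ) + (((m-1)/2 : ℕ) : ℤ) * (2*((k:ℤ)*(m:ℤ)))
            = x + ((k:ℤ)*(m:ℤ))*(m:ℤ) := by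
          have h6 : (((m-1)/2 : ℕ) : ℤ) * 2 = (m:ℤ) - 1 := by
            have h7 := congrArg (Nat.cast : ℕ → ℤ) hodd
            rw [Nat.cast_mul, Nat.cast_sub (by omega : 1 ≤ m)] at h7
            exact_mod_cast h7
          linear_combination ((k:ℤ)*(m:ℤ)) * h6
        rw [e3] at h5
        have h7 : x ∈ R ↔ x + (k:ℤ)*(m:ℤ) ∈ R := h4.trans h5.symm
        have e : ((1:ℕ):ℤ) = (1:ℤ) := by norm_num
        rw [e, one_mul]
        exact h7
  · intro hQ
    refine ⟨{v : ℤ | ∃ p q : ℤ, p - q ∈ R ∧ thz m k p - thz m k q = v}, ?_⟩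
    intro a b
    constructor
    · exact fun h => ⟨a, b, h, rfl⟩
    · rintro ⟨a', b', h', heq⟩
      rw [thz_diff, thz_diff] at heq
      have hdvdc : (m:ℤ) ∣ ((g*m*k : ℕ) : ℤ) := by
        rw [hcast]; exact ⟨(g:ℤ)*(k:ℤ), by ring⟩
      have hQ' : ∀ y : ℤ, ((m:ℤ) ∣ y → 3 ≤ m) → (y ∈ R ↔ y + ((g*m*k : ℕ) : ℤ) ∈ R) := by
        intro y hy
        apply hQ
        by_cases hdd : (m:ℤ) ∣ y
        · exact Or.inr (hy hdd)
        · exact Or.inl ((ndvd_iff hm y).mpr hdd)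
      have hchain := chainZ R ((g*m*k : ℕ) : ℤ) (fun y => ((m:ℤ) ∣ y → 3 ≤ m))
        (fun y hy hdd => hy (by
          have h4 := dvd_sub hdd hdvdc
          have e : y + ((g*m*k : ℕ) : ℤ) - ((g*m*k : ℕ) : ℤ) = y := by ring
          rwa [e] at h4))
        (fun y hy hdd => hy (dvd_add hdd hdvdc)) hQ'
      rcases hgcase with ⟨h2m, hgg⟩ | ⟨h2m, hgg⟩
      · -- m even
        have hpar : ∀ x : ℤ, ((x.natAbs % m : ℕ) : ℤ) % 2 = x % 2 := by
          intro x
          have h1 : x.natAbs % m % 2 = x.natAbs % 2 := Nat.mod_mod_of_dvd _ h2m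
          omega
        have hpa := hpar a
        have hpb := hpar b
        have hpa' := hpar a'
        have hpb' := hpar b'
        have hkm_even : (2:ℤ) ∣ (k:ℤ)*(m:ℤ) := by
          obtain ⟨m', hm'⟩ := h2m
          exact ⟨(k:ℤ)*(m':ℤ), by rw [hm']; push_cast; ring⟩
        have hAB2 : (2:ℤ) ∣ ((a - b) - (a' - b')) := by
          have h5 : (a - b) - (a' - b')
              = ((((a'.natAbs % m : ℕ) : ℤ) - ((b'.natAbs % m : ℕ) : ℤ))
                - (((a.natAbs % m : ℕ) : ℤ) - ((b.natAbs % m : ℕ) : ℤ))) * ((k:ℤ)*(m:ℤ)) := by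
            linear_combination -heq
          rw [h5]
          exact Dvd.dvd.mul_left hkm_even _
        by_cases hPab : ((m:ℤ) ∣ (a' - b') → 3 ≤ m)
        · -- chain case
          have heven : (2:ℤ) ∣ ((((a.natAbs % m : ℕ) : ℤ) - ((b.natAbs % m : ℕ) : ℤ))
              - (((a'.natAbs % m : ℕ) : ℤ) - ((b'.natAbs % m : ℕ) : ℤ))) := by omega
          obtain ⟨w, hw⟩ := heven
          have hce : ((g*m*k : ℕ) : ℤ) = 2*((k:ℤ)*(m:ℤ)) := by
            rw [hcast, hgg]; push_cast; ring
          have e : (a' - b') + (-w) * ((g*m*k : ℕ) : ℤ) = a - b := by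
            rw [hce]
            linear_combination heq + ((k:ℤ)*(m:ℤ)) * hw
          have h6 := hchain (-w) (a' - b') hPab
          rw [e] at h6
          exact h6.mp h'
        · -- m = 2 and a' - b' even : forced equality
          push_neg at hPab
          obtain ⟨hdd2, hm3⟩ := hPab
          have hm2 : m = 2 := by omega
          subst hm2
          have hJa : (a.natAbs % 2 : ℕ) < 2 := Nat.mod_lt _ (by omega)
          have hJb : (b.natAbs % 2 : ℕ) < 2 := Nat.mod_lt _ (by omega)
          have hJa' : (a'.natAbs % 2 : ℕ) < 2 := Nat.mod_lt _ (by omega)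
          have hJb' : (b'.natAbs % 2 : ℕ) < 2 := Nat.mod_lt _ (by omega)
          have hE2 : ((a'.natAbs % 2 : ℕ) : ℤ) - ((b'.natAbs % 2 : ℕ) : ℤ) = 0 := by omega
          have hE1 : ((a.natAbs % 2 : ℕ) : ℤ) - ((b.natAbs % 2 : ℕ) : ℤ) = 0 := by omega
          have e : a - b = a' - b' := by
            linear_combination -heq + ((k:ℤ)*(2:ℤ)) * hE2 - ((k:ℤ)*(2:ℤ)) * hE1
          rwa [e]
      · -- m odd
        have hm3 : 3 ≤ m := by
          rcases Nat.even_or_odd m with he | ho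
          · exact absurd he.two_dvd h2m
          · omega
        have hce : ((g*m*k : ℕ) : ℤ) = (k:ℤ)*(m:ℤ) := by
          rw [hcast, hgg]; push_cast; ring
        have e : (a' - b') + ((((a'.natAbs % m : ℕ) : ℤ) - ((b'.natAbs % m : ℕ) : ℤ))
            - (((a.natAbs % m : ℕ) : ℤ) - ((b.natAbs % m : ℕ) : ℤ))) * ((g*m*k : ℕ) : ℤ)
            = a - b := by
          rw [hce]
          linear_combination heq
        have h6 := hchain ((((a'.natAbs % m : ℕ) : ℤ) - ((b'.natAbs % m : ℕ) : ℤ))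
            - (((a.natAbs % m : ℕ) : ℤ) - ((b.natAbs % m : ℕ) : ℤ))) (a' - b') (fun _ => hm3)
        rw [e] at h6
        exact h6.mp h'

def Qz (m : ℕ) (R : Set ℤ) (w : ℕ) : Prop :=
  ∀ x : ℤ, (x.natAbs % m ≠ 0 ∨ 3 ≤ m) →
    (x ∈ R ↔ x + ((Nat.gcd 2 m * m * w : ℕ) : ℤ) ∈ R)

lemma cond_pres {m : ℕ} (hm : 2 ≤ m) (c : ℕ) (hc : m ∣ c) (x : ℤ)
    (hx : x.natAbs % m ≠ 0 ∨ 3 ≤ m) : (x + (c:ℤ)).natAbs % m ≠ 0 ∨ 3 ≤ m := by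
  rcases hx with h | h
  · left
    rw [ndvd_iff hm] at h ⊢
    intro hdd
    apply h
    have hcz : (m:ℤ) ∣ (c:ℤ) := Int.natCast_dvd_natCast.mpr hc
    have h4 := dvd_sub hdd hcz
    have e : x + (c:ℤ) - (c:ℤ) = x := by ring
    rwa [e] at h4
  · exact Or.inr h

lemma Qz_add {m : ℕ} (hm : 2 ≤ m) {R : Set ℤ} {u v : ℕ}
    (hu : Qz m R u) (hv : Qz m R v) : Qz m R (u + v) := by
  intro x hx
  have h1 := hu x hx
  have h2 := hv (x + ((Nat.gcd 2 m * m * u : ℕ) : ℤ))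
    (cond_pres hm _ ⟨Nat.gcd 2 m * u, by ring⟩ x hx)
  have e : x + ((Nat.gcd 2 m * m * u : ℕ) : ℤ) + ((Nat.gcd 2 m * m * v : ℕ) : ℤ)
      = x + ((Nat.gcd 2 m * m * (u + v) : ℕ) : ℤ) := by
    push_cast
    ring
  rw [e] at h2
  exact h1.trans h2

lemma Qz_sub {m : ℕ} (hm : 2 ≤ m) {R : Set ℤ} {u v : ℕ}
    (huv : Qz m R (u + v)) (hv : Qz m R v) : Qz m R u := by
  intro x hx
  have h1 := huv x hx
  have h2 := hv (x + ((Nat.gcd 2 m * m * u : ℕ) : ℤ))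
    (cond_pres hm _ ⟨Nat.gcd 2 m * u, by ring⟩ x hx)
  have e : x + ((Nat.gcd 2 m * m * u : ℕ) : ℤ) + ((Nat.gcd 2 m * m * v : ℕ) : ℤ)
      = x + ((Nat.gcd 2 m * m * (u + v) : ℕ) : ℤ) := by
    push_cast
    ring
  rw [e] at h2
  exact h1.trans h2.symm

lemma zero_case (m : ℕ) (hm : 2 ≤ m) (R : Set ℤ) (hsym : -R = R) :
    ∃ H : AddSubgroup ℤ, (H : Set ℤ) =
      {t : ℤ | ∃ S : Set ℤ, ∀ a b : ℤ,
        a - b ∈ R ↔ thz m t.natAbs a - thz m t.natAbs b ∈ S} := by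
  refine ⟨⟨⟨⟨{t : ℤ | ∃ S : Set ℤ, ∀ a b : ℤ,
      a - b ∈ R ↔ thz m t.natAbs a - thz m t.natAbs b ∈ S}, ?_⟩, ?_⟩, ?_⟩, rfl⟩
  · -- add_mem
    intro s t hs ht
    have hQs : Qz m R s.natAbs := (char_zero hm R hsym s.natAbs).mp hs
    have hQt : Qz m R t.natAbs := (char_zero hm R hsym t.natAbs).mp ht
    refine (char_zero hm R hsym (s+t).natAbs).mpr ?_
    have htri : (s+t).natAbs = s.natAbs + t.natAbs ∨
        s.natAbs = (s+t).natAbs + t.natAbs ∨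
        t.natAbs = (s+t).natAbs + s.natAbs := by omega
    rcases htri with h | h | h
    · rw [h]
      exact Qz_add hm hQs hQt
    · exact Qz_sub hm (h ▸ hQs) hQt
    · exact Qz_sub hm (h ▸ hQt) hQs
  · -- zero_mem
    refine (char_zero hm R hsym (0:ℤ).natAbs).mpr ?_
    intro x _
    simp
  · -- neg_mem
    intro t ht
    have e : (-t).natAbs = t.natAbs := Int.natAbs_neg t
    simp only [Set.mem_setOf_eq, e]
    exact ht

/-- The set T of those t ∈ ZMod (n/m) for which Θ_{n,m,t} carries the circulant graph
C_n(R) onto some circulant graph C_n(S) is an additive subgroup of ZMod (n/m);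
consequently the corresponding set of image circulant graphs is an abelian group under
the composition induced by addition of the parameters t modulo n/m. -/
theorem type2_set_is_subgroup (n m : ℕ) (hmn : m ∣ n) (hm : 2 ≤ m)
    (R : Set (ZMod n)) (h0 : (0 : ZMod n) ∉ R) (hsym : -R = R) :
    ∃ H : AddSubgroup (ZMod (n / m)),
      (H : Set (ZMod (n / m))) =
        {t : ZMod (n / m) | ∃ S : Set (ZMod n),
          ∀ a b : ZMod n,
            a - b ∈ R ↔ theta n m t.val a - theta n m t.val b ∈ S} := by
  rcases Nat.eq_zero_or_pos n with rfl | hn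
  · rw [Nat.zero_div]
    exact zero_case m hm R hsym
  · have hw0 : 0 < n / m := Nat.div_pos (Nat.le_of_dvd hn hmn) (by omega)
    haveI : NeZero (n / m) := ⟨hw0.ne'⟩
    refine ⟨⟨⟨⟨{t : ZMod (n/m) | ∃ S : Set (ZMod n),
        ∀ a b : ZMod n, a - b ∈ R ↔ theta n m t.val a - theta n m t.val b ∈ S}, ?_⟩, ?_⟩, ?_⟩, rfl⟩
    · -- add_mem'
      intro s t hs ht
      have hQs := (char_pos hn hmn hm R _).mp hs
      have hQt := (char_pos hn hmn hm R _).mp ht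
      refine (char_pos hn hmn hm R _).mpr ?_
      intro x hx
      have hval : (s + t).val = (s.val + t.val) % (n / m) := ZMod.val_add s t
      have hcast : (((s+t).val * m * m : ℕ) : ZMod n)
          = (((s.val + t.val) * m * m : ℕ) : ZMod n) := by
        rw [hval, ← cast_mm_mod hmn]
      rw [hcast]
      exact Qp_add hn hmn R hQs hQt x hx
    · -- zero_mem'
      refine (char_pos hn hmn hm R _).mpr ?_
      intro x hx
      rw [ZMod.val_zero]
      simp
    · -- neg_mem'
      intro t ht
      have hQt := (char_pos hn hmn hm R _).mp ht
      refine (char_pos hn hmn hm R _).mpr ?_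
      intro x hx
      have hsum : ((-t).val + t.val) % (n / m) = 0 := by
        rw [← ZMod.val_add, neg_add_cancel, ZMod.val_zero]
      have hzero : (((-t).val * m * m : ℕ) : ZMod n) + ((t.val * m * m : ℕ) : ZMod n) = 0 := by
        rw [← Nat.cast_add]
        have h : (-t).val * m * m + t.val * m * m = ((-t).val + t.val) * m * m := by ring
        rw [h, cast_mm_mod hmn, hsum]
        simp
      have e : x - (((-t).val * m * m : ℕ) : ZMod n) = x + ((t.val * m * m : ℕ) : ZMod n) := by
        linear_combination -hzero
      rw [e]
      exact Qp_add_right hn hmn R hQt x hx
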